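/- Let P be a nonempty finite multiset of points of the closed unit ball B(0,1) ⊆ ℝ^d, let e > 0 with |P| ≥ 2e, let n ∈ ℝ with |n − |P|| ≤ e, and let S ∈ ℝ^d with ‖S − ∑_{p∈P} p‖ ≤ e. Then n > 0 and ‖S/n − μ(P)‖ ≤ 5e/|P|. -/

import Mathlib

/-- **The noisy centroid is close to the true centroid.** Let `P` be a nonempty finite
multiset of points of the closed unit ball of `ℝ^d`, let `e > 0` with `|P| ≥ 2e`, let
`n ∈ ℝ` with `|n − |P|| ≤ e`, and let `S ∈ ℝ^d` with `‖S − ∑_{p∈P} p‖ ≤ e`.  Then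
`n > 0` and `‖S/n − μ(P)‖ ≤ 5e/|P|`, where `μ(P) = (∑_{p∈P} p)/|P|` is the centroid. -/
theorem noisy_centroid_close {d : ℕ} (P : Multiset (EuclideanSpace ℝ (Fin d)))
    (hP : P ≠ 0)
    (hball : ∀ p ∈ P, p ∈ Metric.closedBall (0 : EuclideanSpace ℝ (Fin d)) 1)
    (e : ℝ) (he : 0 < e) (hcard : 2 * e ≤ (P.card : ℝ))
    (n : ℝ) (hn : |n - (P.card : ℝ)| ≤ e)
    (S : EuclideanSpace ℝ (Fin d)) (hS : ‖S - P.sum‖ ≤ e) :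
    0 < n ∧ ‖n⁻¹ • S - (P.card : ℝ)⁻¹ • P.sum‖ ≤ 5 * e / P.card := by
  have hm0 : 0 < P.card := Multiset.card_pos.mpr hP
  have hm : (0:ℝ) < P.card := by exact_mod_cast hm0
  have hne : (P.card:ℝ) - e ≤ n := by
    have h := abs_le.mp hn
    linarith [h.1]
  have hn0 : 0 < n := by linarith
  refine ⟨hn0, ?_⟩
  have hsum : ‖P.sum‖ ≤ (P.card : ℝ) := by
    have h1 : (P.map (fun p => ‖p‖)).sum ≤ (P.map (fun p => ‖p‖)).card • (1:ℝ) := by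
      apply Multiset.sum_le_card_nsmul
      intro x hx
      obtain ⟨p, hp, rfl⟩ := Multiset.mem_map.mp hx
      have := Metric.mem_closedBall.mp (hball p hp)
      simpa [dist_eq_norm] using this
    calc ‖P.sum‖ ≤ (P.map (fun p => ‖p‖)).sum := norm_multiset_sum_le P
    _ ≤ (P.map (fun p => ‖p‖)).card • (1:ℝ) := h1
    _ = P.card := by simp
  have key : n⁻¹ • S - (P.card:ℝ)⁻¹ • P.sum
      = n⁻¹ • (S - P.sum) + (n⁻¹ - (P.card:ℝ)⁻¹) • P.sum := by
    module
  rw [key]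
  have h1 : ‖n⁻¹ • (S - P.sum)‖ ≤ e / n := by
    rw [norm_smul, Real.norm_eq_abs, abs_of_pos (inv_pos.mpr hn0)]
    rw [div_eq_inv_mul]
    exact mul_le_mul_of_nonneg_left hS (by positivity)
  have habs : |n⁻¹ - (P.card:ℝ)⁻¹| ≤ e / (n * P.card) := by
    have heq : n⁻¹ - (P.card:ℝ)⁻¹ = ((P.card:ℝ) - n) / (n * P.card) := by
      field_simp
    rw [heq, abs_div, abs_of_pos (by positivity : (0:ℝ) < n * P.card)]
    have : |(P.card:ℝ) - n| ≤ e := by rwa [abs_sub_comm]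
    exact div_le_div_of_nonneg_right this (by positivity) |>.trans_eq rfl
  have h2 : ‖(n⁻¹ - (P.card:ℝ)⁻¹) • P.sum‖ ≤ e / n := by
    rw [norm_smul, Real.norm_eq_abs]
    calc |n⁻¹ - (P.card:ℝ)⁻¹| * ‖P.sum‖ ≤ (e / (n * P.card)) * P.card :=
          mul_le_mul habs hsum (norm_nonneg _) (by positivity)
    _ = e / n := by field_simp
  have hhalf : (P.card:ℝ) / 2 ≤ n := by linarith
  have hen : e / n ≤ 2 * e / P.card := by
    rw [div_le_div_iff₀ hn0 hm]
    nlinarith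
  calc ‖n⁻¹ • (S - P.sum) + (n⁻¹ - (P.card:ℝ)⁻¹) • P.sum‖
      ≤ ‖n⁻¹ • (S - P.sum)‖ + ‖(n⁻¹ - (P.card:ℝ)⁻¹) • P.sum‖ := norm_add_le _ _
    _ ≤ e / n + e / n := add_le_add h1 h2
    _ ≤ 2 * e / P.card + 2 * e / P.card := add_le_add hen hen
    _ ≤ 5 * e / P.card := by
        rw [← add_div]
        gcongr
        linarith
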